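/- Let K be a field, V an infinite-dimensional K-vector space, and W ⊆ V a finite-dimensional K-subspace with dim W ≥ 2. Then W has no least finite support: there is no finite set S ⊆ V such that (a) every linear automorphism of V fixing S pointwise maps W onto W, and (b) S ⊆ T for every finite set T ⊆ V such that every linear automorphism of V fixing T pointwise maps W onto W. -/

import Mathlib

/-- In an infinite-dimensional vector space `V`, a finite-dimensional subspace `W` of
dimension at least `2` has no least finite support. -/
theorem stmt_16 (K : Type*) [Field K] (V : Type*) [AddCommGroup V] [Module K V]
    (hV : ¬ FiniteDimensional K V)
    (W : Submodule K V) (hW : FiniteDimensional K W) (hdim : 2 ≤ Module.finrank K W) :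
    ¬ ∃ S : Set V, S.Finite ∧
        (∀ e : V ≃ₗ[K] V, (∀ s ∈ S, e s = s) → Submodule.map (e : V →ₗ[K] V) W = W) ∧
        (∀ T : Set V, T.Finite →
          (∀ e : V ≃ₗ[K] V, (∀ s ∈ T, e s = s) → Submodule.map (e : V →ₗ[K] V) W = W) →
          S ⊆ T) := by
  classical
  rintro ⟨S, -, h1, h2⟩
  set n := Module.finrank K W with hn
  have h0n : (0 : ℕ) < n := by omega
  have h1n : (1 : ℕ) < n := by omega
  let b : Module.Basis (Fin n) K W := Module.finBasis K W
  set f : Fin n → V := fun i => (b i : V) with hf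
  have hfli : LinearIndependent K f := b.linearIndependent.map' W.subtype W.ker_subtype
  have hfinj : Function.Injective f := hfli.injective
  have hspan : Submodule.span K (Set.range f) = W := by
    have hr : Set.range f = W.subtype '' Set.range b := by
      rw [← Set.range_comp]; rfl
    rw [hr, ← Submodule.map_span, b.span_eq, Submodule.map_subtype_top]
  have hfW : ∀ i, f i ∈ W := fun i => (b i).2
  -- any set spanning W supports W
  have hsupp : ∀ T : Set V, Submodule.span K T = W →
      ∀ e : V ≃ₗ[K] V, (∀ s ∈ T, e s = s) → Submodule.map (e : V →ₗ[K] V) W = W := by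
    intro T hT e he
    rw [← hT, Submodule.map_span]
    congr 1
    ext x
    constructor
    · rintro ⟨y, hy, rfl⟩; rw [LinearEquiv.coe_coe, he y hy]; exact hy
    · intro hx; exact ⟨x, hx, by rw [LinearEquiv.coe_coe, he x hx]⟩
  set i0 : Fin n := ⟨0, h0n⟩
  set i1 : Fin n := ⟨1, h1n⟩
  have hi01 : i1 ≠ i0 := by simp [i0, i1, Fin.ext_iff]
  have hS1 : S ⊆ Set.range f := h2 _ (Set.finite_range f) (hsupp _ hspan)
  set f' : Fin n → V := Function.update f i0 (f i0 + f i1) with hf'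
  have hspan' : Submodule.span K (Set.range f') = W := by
    apply le_antisymm
    · rw [Submodule.span_le]
      rintro x ⟨i, rfl⟩
      by_cases h : i = i0
      · subst h
        rw [hf', Function.update_self]
        exact W.add_mem (hfW i0) (hfW i1)
      · rw [hf', Function.update_of_ne h]; exact hfW i
    · rw [← hspan, Submodule.span_le]
      rintro x ⟨i, rfl⟩
      by_cases h : i = i0
      · subst h
        have e1 : f i0 = f' i0 - f' i1 := by
          rw [hf', Function.update_self, Function.update_of_ne hi01]
          abel
        rw [e1]
        exact Submodule.sub_mem _ (Submodule.subset_span ⟨i0, rfl⟩)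
          (Submodule.subset_span ⟨i1, rfl⟩)
      · have : f i = f' i := by rw [hf', Function.update_of_ne h]
        rw [this]
        exact Submodule.subset_span ⟨i, rfl⟩
  have hS2 : S ⊆ Set.range f' := h2 _ (Set.finite_range f') (hsupp _ hspan')
  have key : ∀ x ∈ S, ∃ i, i ≠ i0 ∧ x = f i := by
    intro x hx
    obtain ⟨i, rfl⟩ := hS1 hx
    by_cases h : i = i0
    · subst h
      obtain ⟨j, hj⟩ := hS2 hx
      by_cases h' : j = i0
      · subst h'
        rw [hf', Function.update_self] at hj
        have hz : f i1 = 0 := add_eq_left.1 hj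
        have : (b i1 : V) = ((0 : W) : V) := by simpa [hf] using hz
        exact absurd (Subtype.coe_injective this) (b.ne_zero i1)
      · rw [hf', Function.update_of_ne h'] at hj
        exact absurd (hfinj hj) h'
    · exact ⟨i, h, rfl⟩
  -- pick u outside W
  have hWtop : W ≠ ⊤ := by
    rintro rfl
    exact hV (Submodule.topEquiv (R := K) (M := V)).finiteDimensional
  obtain ⟨u, hu⟩ : ∃ u, u ∉ W := by
    by_contra h
    push_neg at h
    exact hWtop (Submodule.eq_top_iff'.2 h)
  have hli0 : LinearIndependent K ((↑) : Set.range f → V) := (linearIndepOn_id_range_iff hfli.injective).mpr hfli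
  have huspan : u ∉ Submodule.span K (Set.range f) := by rw [hspan]; exact hu
  have hli : LinearIndepOn K id (insert u (Set.range f)) := LinearIndepOn.id_insert hli0 huspan
  let B := Module.Basis.extend hli
  let φ : V →ₗ[K] K := B.constr K (fun x => if (x : V) = u ∨ (x : V) = f i0 then 1 else 0)
  have hmem : ∀ x ∈ insert u (Set.range f), x ∈ hli.extend (Set.subset_univ _) :=
    fun x hx => hli.subset_extend _ hx
  have hφ : ∀ x (hx : x ∈ insert u (Set.range f)),
      φ x = if x = u ∨ x = f i0 then 1 else 0 := by
    intro x hx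
    have hb : B ⟨x, hmem x hx⟩ = x := Module.Basis.extend_apply_self hli ⟨x, hmem x hx⟩
    calc φ x = φ (B ⟨x, hmem x hx⟩) := by rw [hb]
      _ = _ := B.constr_basis K _ _
  have hφu : φ u = 1 := by
    rw [hφ u (Set.mem_insert _ _), if_pos (Or.inl rfl)]
  have hφ0 : φ (f i0) = 1 := by
    rw [hφ (f i0) (Set.mem_insert_of_mem _ ⟨i0, rfl⟩), if_pos (Or.inr rfl)]
  have hφi : ∀ i, i ≠ i0 → φ (f i) = 0 := by
    intro i hi
    rw [hφ (f i) (Set.mem_insert_of_mem _ ⟨i, rfl⟩), if_neg]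
    rintro (h | h)
    · exact hu (h ▸ hfW i)
    · exact hi (hfinj h)
  set w : V := u - f i0 with hw
  have hφw : φ w = 0 := by rw [hw, map_sub, hφu, hφ0, sub_self]
  let e : V ≃ₗ[K] V :=
    { toFun := fun x => x + φ x • w
      map_add' := by
        intro x y
        simp only [map_add, add_smul]
        abel
      map_smul' := by
        intro c x
        simp only [map_smul, smul_eq_mul, RingHom.id_apply, smul_add, mul_smul]
      invFun := fun x => x - φ x • w
      left_inv := by
        intro x
        simp only [map_add, map_smul, hφw, smul_eq_mul, mul_zero, add_zero]
        abel
      right_inv := by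
        intro x
        simp only [map_sub, map_smul, hφw, smul_eq_mul, mul_zero, sub_zero]
        abel }
  have hes : ∀ s ∈ S, e s = s := by
    intro s hs
    obtain ⟨i, hi, rfl⟩ := key s hs
    show f i + φ (f i) • w = f i
    rw [hφi i hi, zero_smul, add_zero]
  have hmap := h1 e hes
  have hu' : u ∈ Submodule.map (e : V →ₗ[K] V) W := by
    refine ⟨f i0, hfW i0, ?_⟩
    show f i0 + φ (f i0) • w = u
    rw [hφ0, one_smul, hw]
    abel
  rw [hmap] at hu'
  exact hu hu'
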